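/- Let n ≥ 5 and 2 ≤ k < n/2 be integers, let K : ℝ → ℝ be C¹ with K' integrable against e^{-nξ}, and let ξ : ℝ → ℝ be a C² solution of F_k[ξ] = K with |ξ'| < 1 on ℝ such that ξ(t) - |t| is bounded on ℝ. Then for every t ∈ ℝ, H(t, ξ(t), ξ'(t)) = -∫_{-∞}^{t} K'(τ)·e^{-nξ(τ)} dτ = ∫_{t}^{∞} K'(τ)·e^{-nξ(τ)} dτ, where H(t,x,y) = 2^{-k}·C(n,k)·e^{(2k-n)x}(1-y²)^k - K(t)·e^{-nx}. In particular, ∫_{-∞}^{∞} K'(τ)·e^{-nξ(τ)} dτ = 0 (Kazdan–Warner-type identity). -/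

import Mathlib

open Real MeasureTheory Filter Set Topology

lemma aux_top (g g' : ℝ → ℝ) (hg : ∀ t, HasDerivAt g (g' t) t) (B : ℝ)
    (hB : ∀ t, |g t| ≤ B) (h1 : ∀ᶠ t in atTop, 1 ≤ g' t) : False := by
  obtain ⟨T, hT⟩ := eventually_atTop.mp h1
  have hd : ∀ x ∈ interior (Ici T), 1 ≤ deriv g x := by
    intro x hx
    rw [interior_Ici] at hx
    rw [(hg x).deriv]
    exact hT x (le_of_lt hx)
  have hBnn : 0 ≤ B := le_trans (abs_nonneg _) (hB T)
  have := (convex_Ici T).mul_sub_le_image_sub_of_le_deriv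
    (fun x _ => (hg x).continuousAt.continuousWithinAt)
    (fun x _ => (hg x).differentiableAt.differentiableWithinAt) hd
    T self_mem_Ici (T + 2*B + 1) (by simp only [mem_Ici]; linarith) (by linarith)
  have h2 := abs_le.mp (hB T)
  have h3 := abs_le.mp (hB (T + 2*B + 1))
  nlinarith

lemma aux_bot (g g' : ℝ → ℝ) (hg : ∀ t, HasDerivAt g (g' t) t) (B : ℝ)
    (hB : ∀ t, |g t| ≤ B) (h1 : ∀ᶠ t in atBot, 1 ≤ g' t) : False := by
  obtain ⟨T, hT⟩ := eventually_atBot.mp h1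
  have hd : ∀ x ∈ interior (Iic T), 1 ≤ deriv g x := by
    intro x hx
    rw [interior_Iic] at hx
    rw [(hg x).deriv]
    exact hT x (le_of_lt hx)
  have hBnn : 0 ≤ B := le_trans (abs_nonneg _) (hB T)
  have := (convex_Iic T).mul_sub_le_image_sub_of_le_deriv
    (fun x _ => (hg x).continuousAt.continuousWithinAt)
    (fun x _ => (hg x).differentiableAt.differentiableWithinAt) hd
    (T - (2*B + 1)) (by simp only [mem_Iic]; linarith) T self_mem_Iic (by linarith)
  have h2 := abs_le.mp (hB T)
  have h3 := abs_le.mp (hB (T - (2*B + 1)))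
  nlinarith

lemma key_limit (l : Filter ℝ) (hl : l = atTop ∨ l = atBot)
    (g g' u ψ : ℝ → ℝ) (M : ℝ)
    (hg : ∀ t, HasDerivAt g (g' t) t) (B : ℝ) (hB : ∀ t, |g t| ≤ B)
    (hu : Tendsto u l atTop) (hψ : Tendsto ψ l (𝓝 M))
    (hgu : ∀ t, g' t = Real.exp (u t) * ψ t) : M = 0 := by
  by_contra hM
  rcases lt_or_gt_of_ne hM with h | h
  · have hT : Tendsto (fun t => Real.exp (u t) * (-ψ t)) l atTop :=
      Tendsto.atTop_mul_pos (by linarith) (Real.tendsto_exp_atTop.comp hu) hψ.neg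
    have h1 : ∀ᶠ t in l, 1 ≤ -(g' t) := by
      filter_upwards [hT.eventually_ge_atTop 1] with t ht
      rw [mul_neg] at ht
      rw [hgu t]
      linarith
    rcases hl with rfl | rfl
    · exact aux_top _ _ (fun t => (hg t).neg) B (fun t => by rw [Pi.neg_apply, abs_neg]; exact hB t) h1
    · exact aux_bot _ _ (fun t => (hg t).neg) B (fun t => by rw [Pi.neg_apply, abs_neg]; exact hB t) h1
  · have hT : Tendsto (fun t => Real.exp (u t) * ψ t) l atTop :=
      Tendsto.atTop_mul_pos h (Real.tendsto_exp_atTop.comp hu) hψ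
    have h1 : ∀ᶠ t in l, 1 ≤ g' t := by
      filter_upwards [hT.eventually_ge_atTop 1] with t ht
      rw [hgu t]; exact ht
    rcases hl with rfl | rfl
    · exact aux_top _ _ hg B hB h1
    · exact aux_bot _ _ hg B hB h1

lemma polyP_hasDerivAt (m : ℕ) (y : ℝ) :
    HasDerivAt (fun y : ℝ => ∑ i ∈ Finset.range (m+1),
      ((m.choose i : ℝ) * (-1)^i / (2*i+1)) * y^(2*i+1)) ((1 - y^2)^m) y := by
  have h := HasDerivAt.fun_sum (u := Finset.range (m+1))
    (fun i _ => (hasDerivAt_pow (2*i+1) y).const_mul ((m.choose i : ℝ) * (-1)^i / (2*i+1)))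
  refine h.congr_deriv ?_
  symm
  rw [show (1:ℝ) - y^2 = -y^2 + 1 by ring, add_pow]
  apply Finset.sum_congr rfl
  intro i _
  have h1 : ((2*i+1 : ℕ) : ℝ) ≠ 0 := by positivity
  have h2 : (-y^2)^i = (-1)^i * y^(2*i) := by rw [neg_pow, pow_mul]
  rw [h2]
  push_cast
  have h3 : (2*(i:ℝ)+1) ≠ 0 := by positivity
  field_simp
  ring

lemma polyP_bound (m : ℕ) (y : ℝ) (hy : |y| ≤ 1) :
    |∑ i ∈ Finset.range (m+1), ((m.choose i : ℝ) * (-1)^i / (2*i+1)) * y^(2*i+1)|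
      ≤ ∑ i ∈ Finset.range (m+1), (m.choose i : ℝ) := by
  refine le_trans (Finset.abs_sum_le_sum_abs _ _) (Finset.sum_le_sum ?_)
  intro i _
  rw [abs_mul, abs_div, abs_mul, abs_pow, abs_pow, abs_neg, abs_one, one_pow, mul_one]
  have h1 : |y|^(2*i+1) ≤ 1 := pow_le_one₀ (abs_nonneg y) hy
  have h2 : (1:ℝ) ≤ |2*(i:ℝ)+1| := by
    rw [abs_of_nonneg (by positivity)]; linarith [Nat.cast_nonneg (α := ℝ) i]
  have h3 : |(m.choose i : ℝ)| = (m.choose i : ℝ) := abs_of_nonneg (Nat.cast_nonneg _)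
  have h4 : |(m.choose i : ℝ)| / |2*(i:ℝ)+1| ≤ (m.choose i : ℝ) := by
    rw [h3]; exact div_le_self (Nat.cast_nonneg _) h2
  calc |(m.choose i : ℝ)| / |2*(i:ℝ)+1| * |y|^(2*i+1)
      ≤ (m.choose i : ℝ) * 1 :=
        mul_le_mul h4 h1 (pow_nonneg (abs_nonneg _) _) (Nat.cast_nonneg _)
    _ = (m.choose i : ℝ) := mul_one _

lemma deriv_main (n k : ℕ) (hn : 5 ≤ n) (hk : 2 ≤ k) (hkn : 2*k < n) (K ξ : ℝ → ℝ)
    (hξd : ∀ t, HasDerivAt ξ (deriv ξ t) t)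
    (hpd : ∀ t, HasDerivAt (deriv ξ) (deriv (deriv ξ) t) t)
    (hKd : ∀ t, HasDerivAt K (deriv K t) t)
    (heq : ∀ t,
      (2:ℝ) ^ ((1:ℝ) - (k:ℝ)) * ((n - 1).choose (k - 1) : ℝ) *
        Real.exp (2 * (k:ℝ) * ξ t) * (1 - (deriv ξ t) ^ 2) ^ (k - 1) *
        (deriv (deriv ξ) t + (((n:ℝ) - 2 * (k:ℝ)) / (2 * (k:ℝ))) * (1 - (deriv ξ t) ^ 2)) = K t)
    (t : ℝ) :
    HasDerivAt (fun s => (2:ℝ) ^ (-(k:ℝ)) * (n.choose k : ℝ) *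
        Real.exp ((2 * (k:ℝ) - (n:ℝ)) * ξ s) * (1 - (deriv ξ s) ^ 2) ^ k
        - K s * Real.exp (-(n:ℝ) * ξ s))
      (-(deriv K t * Real.exp (-(n:ℝ) * ξ t))) t := by
  have A1 : HasDerivAt (fun s => Real.exp ((2 * (k:ℝ) - (n:ℝ)) * ξ s))
      (Real.exp ((2 * (k:ℝ) - (n:ℝ)) * ξ t) * ((2 * (k:ℝ) - (n:ℝ)) * deriv ξ t)) t :=
    ((hξd t).const_mul _).exp
  have A2 : HasDerivAt (fun s => (1 - (deriv ξ s) ^ 2) ^ k)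
      ((k:ℝ) * (1 - (deriv ξ t) ^ 2) ^ (k-1) *
        (0 - ((2:ℕ) * deriv ξ t ^ (2-1) * deriv (deriv ξ) t))) t :=
    ((hasDerivAt_const t (1:ℝ)).sub ((hpd t).pow 2)).pow k
  have A4 : HasDerivAt (fun s => Real.exp (-(n:ℝ) * ξ s))
      (Real.exp (-(n:ℝ) * ξ t) * (-(n:ℝ) * deriv ξ t)) t :=
    ((hξd t).const_mul _).exp
  have A6 := ((A1.const_mul ((2:ℝ) ^ (-(k:ℝ)) * (n.choose k : ℝ))).mul A2).sub ((hKd t).mul A4)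
  refine A6.congr_deriv ?_
  symm
  rw [← heq t]
  obtain ⟨j, rfl⟩ : ∃ j, k = j + 2 := ⟨k - 2, by omega⟩
  have hk1 : j + 2 - 1 = j + 1 := by omega
  have h21 : (2:ℕ) - 1 = 1 := rfl
  have hEk : Real.exp ((2 * ((j+2:ℕ):ℝ) - (n:ℝ)) * ξ t)
      = Real.exp (2 * ((j+2:ℕ):ℝ) * ξ t) * Real.exp (-(n:ℝ) * ξ t) := by
    rw [← Real.exp_add]; ring_nf
  have h2k : (2:ℝ) ^ ((1:ℝ) - ((j+2:ℕ):ℝ)) = 2 * (2:ℝ) ^ (-((j+2:ℕ):ℝ)) := by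
    rw [show (1:ℝ) - ((j+2:ℕ):ℝ) = 1 + -((j+2:ℕ):ℝ) by ring, Real.rpow_add two_pos,
      Real.rpow_one]
  have hchoose : ((n.choose (j+2) : ℕ) : ℝ)
      = (n:ℝ) * (((n-1).choose (j+1) : ℕ) : ℝ) / ((j:ℝ)+2) := by
    have h := Nat.add_one_mul_choose_eq (n-1) (j+1)
    have hn' : n - 1 + 1 = n := by omega
    rw [hn'] at h
    rw [eq_div_iff (by positivity)]
    exact_mod_cast congrArg (Nat.cast : ℕ → ℝ) h.symm
  rw [hk1, h21, hEk, h2k, hchoose]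
  set R := (2:ℝ) ^ (-(((j:ℝ))+2)) with hR
  have hRpos : (0:ℝ) < R := Real.rpow_pos_of_pos two_pos _
  set E2 := Real.exp (2 * ((j:ℝ)+2) * ξ t)
  set En := Real.exp (-(n:ℝ) * ξ t)
  set P := deriv ξ t
  set Q := deriv (deriv ξ) t
  have hj2 : ((j:ℝ)+2) ≠ 0 := by positivity
  push_cast
  field_simp
  ring

theorem stmt_16 (n k : ℕ) (hn : 5 ≤ n) (hk : 2 ≤ k) (hkn : 2 * k < n)
    (K : ℝ → ℝ) (hK : ContDiff ℝ 1 K)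
    (ξ : ℝ → ℝ) (hξ : ContDiff ℝ 2 ξ)
    (hInt : Integrable (fun τ => deriv K τ * Real.exp (-(n:ℝ) * ξ τ)))
    (heq : ∀ t,
      (2:ℝ) ^ ((1:ℝ) - (k:ℝ)) * ((n - 1).choose (k - 1) : ℝ) *
        Real.exp (2 * (k:ℝ) * ξ t) * (1 - (deriv ξ t) ^ 2) ^ (k - 1) *
        (deriv (deriv ξ) t + (((n:ℝ) - 2 * (k:ℝ)) / (2 * (k:ℝ))) * (1 - (deriv ξ t) ^ 2)) = K t)
    (hξ' : ∀ t, |deriv ξ t| < 1)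
    (hbd : ∃ C : ℝ, ∀ t, abs (ξ t - abs t) ≤ C)
    (H : ℝ → ℝ → ℝ → ℝ)
    (hH : ∀ t x y, H t x y = (2:ℝ) ^ (-(k:ℝ)) * (n.choose k : ℝ) *
        Real.exp ((2 * (k:ℝ) - (n:ℝ)) * x) * (1 - y ^ 2) ^ k - K t * Real.exp (-(n:ℝ) * x)) :
    (∀ t : ℝ,
      H t (ξ t) (deriv ξ t) = -∫ τ in Set.Iic t, deriv K τ * Real.exp (-(n:ℝ) * ξ τ) ∧
      H t (ξ t) (deriv ξ t) = ∫ τ in Set.Ioi t, deriv K τ * Real.exp (-(n:ℝ) * ξ τ)) ∧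
    ∫ τ : ℝ, deriv K τ * Real.exp (-(n:ℝ) * ξ τ) = 0 := by
  -- basic differentiability
  have hξd : ∀ t, HasDerivAt ξ (deriv ξ t) t :=
    fun t => ((hξ.differentiable (by norm_num)) t).hasDerivAt
  have hξ2 : ContDiff ℝ (1+1) ξ := by norm_num [hξ]
  obtain ⟨-, -, hcd⟩ := contDiff_succ_iff_deriv.mp hξ2
  have hpd : ∀ t, HasDerivAt (deriv ξ) (deriv (deriv ξ) t) t :=
    fun t => ((hcd.differentiable one_ne_zero) t).hasDerivAt
  have hKd : ∀ t, HasDerivAt K (deriv K t) t :=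
    fun t => ((hK.differentiable one_ne_zero) t).hasDerivAt
  set f : ℝ → ℝ := fun τ => deriv K τ * Real.exp (-(n:ℝ) * ξ τ) with hf_def
  set hfun : ℝ → ℝ := fun s => (2:ℝ) ^ (-(k:ℝ)) * (n.choose k : ℝ) *
      Real.exp ((2 * (k:ℝ) - (n:ℝ)) * ξ s) * (1 - (deriv ξ s) ^ 2) ^ k
      - K s * Real.exp (-(n:ℝ) * ξ s) with hfun_def
  have hHfun : ∀ t, H t (ξ t) (deriv ξ t) = hfun t := fun t => hH t _ _
  have hder : ∀ t, HasDerivAt hfun (-(f t)) t :=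
    fun t => deriv_main n k hn hk hkn K ξ hξd hpd hKd heq t
  -- limits of the interval integrals
  have hfun_eq : ∀ t, hfun t = hfun 0 - ∫ x in (0:ℝ)..t, f x := by
    intro t
    have h1 : ∫ x in (0:ℝ)..t, -(f x) = hfun t - hfun 0 :=
      intervalIntegral.integral_eq_sub_of_hasDerivAt (fun x _ => hder x)
        hInt.intervalIntegrable.neg
    rw [intervalIntegral.integral_neg] at h1
    linarith
  have hTtop : Tendsto hfun atTop (𝓝 (hfun 0 - ∫ x in Set.Ioi (0:ℝ), f x)) := by
    have h1 := MeasureTheory.intervalIntegral_tendsto_integral_Ioi 0 hInt.integrableOn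
      (tendsto_id (α := ℝ) (x := atTop))
    exact ((tendsto_const_nhds (x := hfun 0)).sub h1).congr fun t => (hfun_eq t).symm
  have hTbot : Tendsto hfun atBot (𝓝 (hfun 0 + ∫ x in Set.Iic (0:ℝ), f x)) := by
    have h1 := MeasureTheory.intervalIntegral_tendsto_integral_Iic 0 hInt.integrableOn
      (tendsto_id (α := ℝ) (x := atBot))
    refine ((tendsto_const_nhds (x := hfun 0)).add h1).congr fun t => ?_
    simp only [id_eq]
    rw [intervalIntegral.integral_symm, hfun_eq t]
    ring
  -- ξ tends to +∞ along both ends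
  obtain ⟨C, hC⟩ := hbd
  have hxi_lb : ∀ t, |t| - C ≤ ξ t := by
    intro t
    have := abs_le.mp (hC t)
    linarith [this.1]
  have hxtop : Tendsto ξ atTop atTop := by
    apply tendsto_atTop_mono (f := fun t => t + -C)
    · intro t; have := hxi_lb t; have := le_abs_self t; linarith
    · exact tendsto_atTop_add_const_right atTop (-C) tendsto_id
  have hxbot : Tendsto ξ atBot atTop := by
    apply tendsto_atTop_mono (f := fun t => -t + -C)
    · intro t; have := hxi_lb t; have := neg_le_abs t; linarith
    · exact tendsto_atTop_add_const_right atBot (-C) tendsto_neg_atBot_atTop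
  -- positivity facts
  have hw : ∀ t, 0 < 1 - deriv ξ t ^ 2 := by
    intro t
    have h := abs_lt.mp (hξ' t)
    nlinarith [h.1, h.2]
  have hw1 : ∀ t, 1 - deriv ξ t ^ 2 ≤ 1 := by
    intro t; nlinarith [sq_nonneg (deriv ξ t)]
  -- reduce k
  obtain ⟨j, rfl⟩ : ∃ j, k = j + 2 := ⟨k - 2, by omega⟩
  have hk1 : j + 2 - 1 = j + 1 := by omega
  simp only [hk1] at heq
  -- the bounded primitive G
  have hGd : ∀ t, HasDerivAt (fun t => ∑ i ∈ Finset.range (j+1+1),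
      (((j+1).choose i : ℝ) * (-1)^i / (2*i+1)) * (deriv ξ t)^(2*i+1))
      ((1 - deriv ξ t ^ 2) ^ (j+1) * deriv (deriv ξ) t) t :=
    fun t => (polyP_hasDerivAt (j+1) (deriv ξ t)).comp t (hpd t)
  have hGb : ∀ t, |∑ i ∈ Finset.range (j+1+1),
      (((j+1).choose i : ℝ) * (-1)^i / (2*i+1)) * (deriv ξ t)^(2*i+1)|
      ≤ ∑ i ∈ Finset.range (j+1+1), ((j+1).choose i : ℝ) :=
    fun t => polyP_bound (j+1) _ (le_of_lt (hξ' t))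
  -- main limit argument
  have hsplit : ∀ x : ℝ, Real.exp (2 * ((j+2:ℕ):ℝ) * x) * Real.exp (-(n:ℝ) * x)
      = Real.exp ((2 * ((j+2:ℕ):ℝ) - (n:ℝ)) * x) := by
    intro x; rw [← Real.exp_add]; ring_nf
  have ha0 : (0:ℝ) < (2:ℝ) ^ ((1:ℝ) - ((j+2:ℕ):ℝ)) * ((n - 1).choose (j+1) : ℝ) := by
    apply mul_pos (Real.rpow_pos_of_pos two_pos _)
    have : j + 1 ≤ n - 1 := by omega
    exact_mod_cast Nat.cast_pos.mpr (Nat.choose_pos this)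
  have main : ∀ l : Filter ℝ, l = atTop ∨ l = atBot → Tendsto ξ l atTop →
      ∀ L : ℝ, Tendsto hfun l (𝓝 L) → Tendsto hfun l (𝓝 0) := by
    intro l hl hxl L hL
    have hnk : (0:ℝ) < (n:ℝ) - 2 * ((j+2:ℕ):ℝ) := by
      have h2 : ((2 * (j+2) : ℕ):ℝ) < (n:ℝ) := Nat.cast_lt.mpr hkn
      push_cast at h2 ⊢
      linarith
    have hu : Tendsto (fun t => ((n:ℝ) - 2 * ((j+2:ℕ):ℝ)) * ξ t) l atTop :=
      hxl.const_mul_atTop hnk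
    have hv0 : Tendsto (fun t => Real.exp ((2 * ((j+2:ℕ):ℝ) - (n:ℝ)) * ξ t)) l (𝓝 0) := by
      apply Real.tendsto_exp_atBot.comp
      have := hxl.const_mul_atTop_of_neg (r := 2 * ((j+2:ℕ):ℝ) - (n:ℝ)) (by linarith)
      exact this
    -- φ → 0
    have hφ0 : Tendsto (fun t => (2:ℝ) ^ (-((j+2:ℕ):ℝ)) * (n.choose (j+2) : ℝ) *
        Real.exp ((2 * ((j+2:ℕ):ℝ) - (n:ℝ)) * ξ t) * (1 - deriv ξ t ^ 2) ^ (j+2)) l (𝓝 0) := by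
      apply squeeze_zero_norm (a := fun t => (2:ℝ) ^ (-((j+2:ℕ):ℝ)) * (n.choose (j+2) : ℝ) *
        Real.exp ((2 * ((j+2:ℕ):ℝ) - (n:ℝ)) * ξ t))
      · intro t
        have h1 : (1 - deriv ξ t ^ 2) ^ (j+2) ≤ 1 :=
          pow_le_one₀ (le_of_lt (hw t)) (hw1 t)
        have h2 : (0:ℝ) ≤ (2:ℝ) ^ (-((j+2:ℕ):ℝ)) * (n.choose (j+2) : ℝ) *
            Real.exp ((2 * ((j+2:ℕ):ℝ) - (n:ℝ)) * ξ t) := by positivity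
        have hnn : (0:ℝ) ≤ (2:ℝ) ^ (-((j+2:ℕ):ℝ)) * (n.choose (j+2) : ℝ) *
            Real.exp ((2 * ((j+2:ℕ):ℝ) - (n:ℝ)) * ξ t) * (1 - deriv ξ t ^ 2) ^ (j+2) :=
          mul_nonneg h2 (pow_nonneg (hw t).le _)
        rw [Real.norm_eq_abs, abs_of_nonneg hnn]
        nlinarith
      · have := hv0.const_mul ((2:ℝ) ^ (-((j+2:ℕ):ℝ)) * (n.choose (j+2) : ℝ))
        simpa [mul_assoc] using this
    -- K e^{-nξ} → -L
    have hKEn : Tendsto (fun t => K t * Real.exp (-(n:ℝ) * ξ t)) l (𝓝 (0 - L)) := by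
      refine (hφ0.sub hL).congr fun t => ?_
      simp only [hfun_def]
      ring
    -- error term → 0
    have hT2 : Tendsto (fun t => (2:ℝ) ^ ((1:ℝ) - ((j+2:ℕ):ℝ)) * ((n - 1).choose (j+1) : ℝ) *
        ((((n:ℝ) - 2 * ((j+2:ℕ):ℝ))) / (2 * ((j+2:ℕ):ℝ))) *
        (Real.exp ((2 * ((j+2:ℕ):ℝ) - (n:ℝ)) * ξ t) * (1 - deriv ξ t ^ 2) ^ (j+2))) l (𝓝 0) := by
      apply squeeze_zero_norm (a := fun t => (2:ℝ) ^ ((1:ℝ) - ((j+2:ℕ):ℝ)) *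
        ((n - 1).choose (j+1) : ℝ) * ((((n:ℝ) - 2 * ((j+2:ℕ):ℝ))) / (2 * ((j+2:ℕ):ℝ))) *
        Real.exp ((2 * ((j+2:ℕ):ℝ) - (n:ℝ)) * ξ t))
      · intro t
        have h1 : (1 - deriv ξ t ^ 2) ^ (j+2) ≤ 1 :=
          pow_le_one₀ (le_of_lt (hw t)) (hw1 t)
        have hcd0 : (0:ℝ) ≤ (2:ℝ) ^ ((1:ℝ) - ((j+2:ℕ):ℝ)) * ((n - 1).choose (j+1) : ℝ) *
            ((((n:ℝ) - 2 * ((j+2:ℕ):ℝ))) / (2 * ((j+2:ℕ):ℝ))) :=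
          mul_nonneg (by positivity) (div_nonneg hnk.le (by positivity))
        have h2 : (0:ℝ) ≤ (2:ℝ) ^ ((1:ℝ) - ((j+2:ℕ):ℝ)) * ((n - 1).choose (j+1) : ℝ) *
            ((((n:ℝ) - 2 * ((j+2:ℕ):ℝ))) / (2 * ((j+2:ℕ):ℝ))) *
            Real.exp ((2 * ((j+2:ℕ):ℝ) - (n:ℝ)) * ξ t) :=
          mul_nonneg hcd0 (Real.exp_pos _).le
        have hnn : (0:ℝ) ≤ (2:ℝ) ^ ((1:ℝ) - ((j+2:ℕ):ℝ)) * ((n - 1).choose (j+1) : ℝ) *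
            ((((n:ℝ) - 2 * ((j+2:ℕ):ℝ))) / (2 * ((j+2:ℕ):ℝ))) *
            (Real.exp ((2 * ((j+2:ℕ):ℝ) - (n:ℝ)) * ξ t) * (1 - deriv ξ t ^ 2) ^ (j+2)) :=
          mul_nonneg hcd0 (mul_nonneg (Real.exp_pos _).le (pow_nonneg (hw t).le _))
        rw [Real.norm_eq_abs, abs_of_nonneg hnn]
        nlinarith
      · have := hv0.const_mul ((2:ℝ) ^ ((1:ℝ) - ((j+2:ℕ):ℝ)) * ((n - 1).choose (j+1) : ℝ) *
          ((((n:ℝ) - 2 * ((j+2:ℕ):ℝ))) / (2 * ((j+2:ℕ):ℝ))))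
        simpa using this
    -- a0 ψ → -L
    have hψa : Tendsto (fun t => ((2:ℝ) ^ ((1:ℝ) - ((j+2:ℕ):ℝ)) * ((n - 1).choose (j+1) : ℝ)) *
        (Real.exp ((2 * ((j+2:ℕ):ℝ) - (n:ℝ)) * ξ t) *
          ((1 - deriv ξ t ^ 2) ^ (j+1) * deriv (deriv ξ) t))) l (𝓝 ((0 - L) - 0)) := by
      refine (hKEn.sub hT2).congr fun t => ?_
      have hs := hsplit (ξ t)
      rw [← heq t, ← hs]
      ring
    -- ψ → M
    set a0 : ℝ := (2:ℝ) ^ ((1:ℝ) - ((j+2:ℕ):ℝ)) * ((n - 1).choose (j+1) : ℝ) with ha0_def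
    have ha0' : a0 ≠ 0 := ne_of_gt ha0
    have hψ : Tendsto (fun t => Real.exp ((2 * ((j+2:ℕ):ℝ) - (n:ℝ)) * ξ t) *
        ((1 - deriv ξ t ^ 2) ^ (j+1) * deriv (deriv ξ) t)) l (𝓝 (((0 - L) - 0) * a0⁻¹)) := by
      have := hψa.mul_const a0⁻¹
      refine this.congr fun t => ?_
      field_simp
    -- apply key_limit
    have hM0 : ((0 - L) - 0) * a0⁻¹ = 0 := by
      refine key_limit l hl _ _ _ _ _ hGd _ hGb hu hψ ?_
      intro t
      have hvv : Real.exp (((n:ℝ) - 2 * ((j+2:ℕ):ℝ)) * ξ t) *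
          Real.exp ((2 * ((j+2:ℕ):ℝ) - (n:ℝ)) * ξ t) = 1 := by
        rw [← Real.exp_add, ← Real.exp_zero]
        congr 1
        ring
      calc (1 - deriv ξ t ^ 2) ^ (j+1) * deriv (deriv ξ) t
          = (Real.exp (((n:ℝ) - 2 * ((j+2:ℕ):ℝ)) * ξ t) *
              Real.exp ((2 * ((j+2:ℕ):ℝ) - (n:ℝ)) * ξ t)) *
            ((1 - deriv ξ t ^ 2) ^ (j+1) * deriv (deriv ξ) t) := by rw [hvv, one_mul]
        _ = Real.exp (((n:ℝ) - 2 * ((j+2:ℕ):ℝ)) * ξ t) *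
            (Real.exp ((2 * ((j+2:ℕ):ℝ) - (n:ℝ)) * ξ t) *
              ((1 - deriv ξ t ^ 2) ^ (j+1) * deriv (deriv ξ) t)) := by ring
    have hL0 : L = 0 := by
      have := mul_eq_zero.mp hM0
      rcases this with h | h
      · linarith
      · exact absurd h (inv_ne_zero ha0')
    rwa [hL0] at hL
  have htop0 : Tendsto hfun atTop (𝓝 0) := main atTop (Or.inl rfl) hxtop _ hTtop
  have hbot0 : Tendsto hfun atBot (𝓝 0) := main atBot (Or.inr rfl) hxbot _ hTbot
  -- conclude with improper FTC
  have hIic : ∀ t, ∫ τ in Set.Iic t, f τ = -(hfun t) := by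
    intro t
    have h1 : ∫ x in Set.Iic t, -(f x) = hfun t - 0 :=
      integral_Iic_of_hasDerivAt_of_tendsto' (fun x _ => hder x)
        hInt.neg.integrableOn hbot0
    rw [MeasureTheory.integral_neg] at h1
    linarith
  have hIoi : ∀ t, ∫ τ in Set.Ioi t, f τ = hfun t := by
    intro t
    have h1 : ∫ x in Set.Ioi t, -(f x) = 0 - hfun t :=
      integral_Ioi_of_hasDerivAt_of_tendsto' (fun x _ => hder x)
        hInt.neg.integrableOn htop0
    rw [MeasureTheory.integral_neg] at h1
    linarith
  refine ⟨fun t => ⟨?_, ?_⟩, ?_⟩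
  · rw [hHfun t, hIic t, neg_neg]
  · rw [hHfun t, hIoi t]
  · have := intervalIntegral.integral_Iic_add_Ioi (b := (0:ℝ)) hInt.integrableOn hInt.integrableOn
    rw [hIic 0, hIoi 0] at this
    rw [← this]
    ring
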